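/- For every fixed real symmetric positive definite d×d matrix A, the function B ↦ M(A, B) is continuous on the set of real symmetric positive definite d×d matrices. -/

import Mathlib

open Matrix

/-- Eigenspace of a `d × d` real matrix `A` for the (potential) eigenvalue `μ`. -/
noncomputable def eigSp {d : ℕ} (A : Matrix (Fin d) (Fin d) ℝ) (μ : ℝ) :
    Submodule ℝ (Fin d → ℝ) :=
  Module.End.eigenspace A.mulVecLin μ

/-- `A` is aligned with `B` if every eigenspace of `B` is contained in an eigenspace of `A`. -/
def IsAligned {d : ℕ} (A B : Matrix (Fin d) (Fin d) ℝ) : Prop :=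
  ∀ μ : ℝ, ∃ ν : ℝ, eigSp B μ ≤ eigSp A ν

/-- The misalignment `M(A, B)`: the infimum, over symmetric positive definite matrices `S`
aligned with `A`, of `(1/2) · tr(S⁻¹ B + B⁻¹ S) − d`. -/
noncomputable def misalignment {d : ℕ} (A B : Matrix (Fin d) (Fin d) ℝ) : ℝ :=
  sInf {m : ℝ | ∃ S : Matrix (Fin d) (Fin d) ℝ,
    S.PosDef ∧ IsAligned S A ∧ m = (1 / 2) * (S⁻¹ * B + B⁻¹ * S).trace - d}

namespace MisalignAux

variable {d : ℕ}

lemma psd_trace_nonneg {P : Matrix (Fin d) (Fin d) ℝ} (hP : P.PosSemidef) : 0 ≤ P.trace := by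
  rw [Matrix.trace]
  apply Finset.sum_nonneg
  intro i _
  have h := hP.dotProduct_mulVec_nonneg (Pi.single i 1)
  simpa [Matrix.mulVec, dotProduct, Pi.single_apply] using h

open scoped MatrixOrder in
lemma psd_mul_trace_nonneg {P Q : Matrix (Fin d) (Fin d) ℝ} (hP : P.PosSemidef)
    (hQ : Q.PosSemidef) : 0 ≤ (P * Q).trace := by
  have hs := (CFC.sqrt_nonneg P).posSemidef
  have h1 : (P * Q).trace = (CFC.sqrt P * Q * CFC.sqrt P).trace := by
    conv_lhs => rw [← CFC.sqrt_mul_sqrt_self P hP.nonneg]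
    rw [mul_assoc, Matrix.trace_mul_comm]
  rw [h1]
  have : (CFC.sqrt P * Q * CFC.sqrt P).PosSemidef := by
    have := hQ.conjTranspose_mul_mul_same (CFC.sqrt P)
    rwa [hs.isHermitian.eq] at this
  exact psd_trace_nonneg this

lemma quad_smul (B : Matrix (Fin d) (Fin d) ℝ) (c : ℝ) (x : Fin d → ℝ) :
    (c • x) ⬝ᵥ B *ᵥ (c • x) = c ^ 2 * (x ⬝ᵥ B *ᵥ x) := by
  rw [Matrix.mulVec_smul, smul_dotProduct, dotProduct_smul]
  simp [smul_eq_mul]; ring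

lemma coercive {B : Matrix (Fin d) (Fin d) ℝ} (hB : B.PosDef) :
    ∃ c > 0, ∀ x : Fin d → ℝ, c * ∑ i, x i ^ 2 ≤ x ⬝ᵥ B *ᵥ x := by
  rcases Nat.eq_zero_or_pos d with hd | hd
  · subst hd
    exact ⟨1, one_pos, fun x => by simp [dotProduct]⟩
  haveI : Nonempty (Fin d) := ⟨⟨0, hd⟩⟩
  have hf : Continuous fun x : Fin d → ℝ => x ⬝ᵥ B *ᵥ x :=
    (continuous_id).dotProduct (continuous_const.matrix_mulVec continuous_id)
  have hne : (Metric.sphere (0 : Fin d → ℝ) 1).Nonempty := by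
    rw [NormedSpace.sphere_nonempty]; norm_num
  obtain ⟨u0, hu0, hmin⟩ :=
    (isCompact_sphere (0 : Fin d → ℝ) 1).exists_isMinOn hne hf.continuousOn
  have hu0norm : ‖u0‖ = 1 := by simpa using hu0
  have hu0ne : u0 ≠ 0 := by
    intro h; rw [h] at hu0norm; simp at hu0norm
  have hc0 : 0 < u0 ⬝ᵥ B *ᵥ u0 := by
    have := hB.dotProduct_mulVec_pos hu0ne
    simpa using this
  refine ⟨(u0 ⬝ᵥ B *ᵥ u0) / d, by positivity, fun x => ?_⟩
  rcases eq_or_ne x 0 with rfl | hx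
  · simp
  have hxnorm : (0:ℝ) < ‖x‖ := norm_pos_iff.2 hx
  set u : Fin d → ℝ := ‖x‖⁻¹ • x with hu
  have humem : u ∈ Metric.sphere (0 : Fin d → ℝ) 1 := by
    simp [hu, norm_smul, abs_of_nonneg (inv_nonneg.2 hxnorm.le), inv_mul_cancel₀ hxnorm.ne']
  have hxu : x = ‖x‖ • u := by
    rw [hu, smul_smul, mul_inv_cancel₀ hxnorm.ne', one_smul]
  have hfx : x ⬝ᵥ B *ᵥ x = ‖x‖ ^ 2 * (u ⬝ᵥ B *ᵥ u) := by
    conv_lhs => rw [hxu]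
    exact quad_smul B ‖x‖ u
  have hsum : ∑ i, x i ^ 2 ≤ d * ‖x‖ ^ 2 := by
    have : ∀ i, x i ^ 2 ≤ ‖x‖ ^ 2 := fun i => by
      have h1 : |x i| ≤ ‖x‖ := by
        simpa [Real.norm_eq_abs] using norm_le_pi_norm x i
      nlinarith [abs_nonneg (x i), sq_abs (x i)]
    calc ∑ i, x i ^ 2 ≤ ∑ _i : Fin d, ‖x‖ ^ 2 := Finset.sum_le_sum fun i _ => this i
      _ = d * ‖x‖ ^ 2 := by simp [Finset.sum_const]
  have hmin' : u0 ⬝ᵥ B *ᵥ u0 ≤ u ⬝ᵥ B *ᵥ u := isMinOn_iff.1 hmin u humem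
  rw [hfx]
  rw [div_mul_eq_mul_div, div_le_iff₀ (by exact_mod_cast hd)]
  calc (u0 ⬝ᵥ B *ᵥ u0) * ∑ i, x i ^ 2 ≤ (u0 ⬝ᵥ B *ᵥ u0) * (d * ‖x‖ ^ 2) := by
        exact mul_le_mul_of_nonneg_left hsum hc0.le
    _ ≤ ‖x‖ ^ 2 * (u ⬝ᵥ B *ᵥ u) * d := by
        nlinarith [mul_le_mul_of_nonneg_left hmin'
          (by positivity : (0:ℝ) ≤ (d:ℝ) * ‖x‖ ^ 2)]

lemma quad_bound (D : Matrix (Fin d) (Fin d) ℝ) {δ : ℝ} (hδ : 0 ≤ δ)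
    (hD : ∀ i j, |D i j| ≤ δ) (x : Fin d → ℝ) :
    |x ⬝ᵥ D *ᵥ x| ≤ δ * d * ∑ i, x i ^ 2 := by
  have habs : ∀ i, |(D *ᵥ x) i| ≤ δ * ∑ j, |x j| := by
    intro i
    rw [Matrix.mulVec, dotProduct]
    refine (Finset.abs_sum_le_sum_abs _ _).trans ?_
    rw [Finset.mul_sum]
    refine Finset.sum_le_sum fun j _ => ?_
    rw [abs_mul]
    exact mul_le_mul_of_nonneg_right (hD i j) (abs_nonneg _)
  have key := sq_sum_le_card_mul_sum_sq (s := (Finset.univ : Finset (Fin d)))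
    (f := fun i : Fin d => |x i|)
  have hcard : ((Finset.univ : Finset (Fin d)).card : ℝ) = d := by simp
  calc |x ⬝ᵥ D *ᵥ x| = |∑ i, x i * (D *ᵥ x) i| := by rw [dotProduct]
    _ ≤ ∑ i, |x i * (D *ᵥ x) i| := Finset.abs_sum_le_sum_abs _ _
    _ ≤ ∑ i, |x i| * (δ * ∑ j, |x j|) := Finset.sum_le_sum fun i _ => by
        rw [abs_mul]; exact mul_le_mul_of_nonneg_left (habs i) (abs_nonneg _)
    _ = δ * (∑ i, |x i|) ^ 2 := by rw [← Finset.sum_mul]; ring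
    _ ≤ δ * (d * ∑ i, |x i| ^ 2) := by
        refine mul_le_mul_of_nonneg_left ?_ hδ
        calc (∑ i, |x i|) ^ 2 ≤ ((Finset.univ : Finset (Fin d)).card : ℝ) * ∑ i, |x i| ^ 2 := by
              exact_mod_cast key
          _ = d * ∑ i, |x i| ^ 2 := by rw [hcard]
    _ = δ * d * ∑ i, x i ^ 2 := by simp only [sq_abs]; ring

lemma psd_of_entry_close {B D : Matrix (Fin d) (Fin d) ℝ} (hB : B.IsHermitian)
    (hD : D.IsHermitian) {c ε : ℝ} (hc : 0 < c)
    (hcoer : ∀ x : Fin d → ℝ, c * ∑ i, x i ^ 2 ≤ x ⬝ᵥ B *ᵥ x) (hε : 0 < ε)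
    (hDsmall : ∀ i j, |D i j| ≤ ε * c / (d + 1)) :
    (ε • B - D).PosSemidef ∧ (ε • B + D).PosSemidef := by
  have hherm1 : (ε • B - D).IsHermitian := by
    unfold Matrix.IsHermitian at *
    rw [conjTranspose_sub, conjTranspose_smul, hB, hD, star_trivial]
  have hherm2 : (ε • B + D).IsHermitian := by
    unfold Matrix.IsHermitian at *
    rw [conjTranspose_add, conjTranspose_smul, hB, hD, star_trivial]
  have hkey : ∀ x : Fin d → ℝ, |x ⬝ᵥ D *ᵥ x| ≤ ε * (x ⬝ᵥ B *ᵥ x) := by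
    intro x
    have h1 := quad_bound D (by positivity) hDsmall x
    have h2 : (0:ℝ) ≤ ∑ i, x i ^ 2 := Finset.sum_nonneg fun i _ => sq_nonneg _
    have h3 : ε * c / (d + 1) * d * ∑ i, x i ^ 2 ≤ ε * (c * ∑ i, x i ^ 2) := by
      have hd1 : (d:ℝ) / ((d:ℝ) + 1) ≤ 1 := by
        rw [div_le_one (by positivity)]; linarith
      have heq : ε * c / ((d:ℝ) + 1) * (d:ℝ) * ∑ i, x i ^ 2
          = ε * (c * ∑ i, x i ^ 2) * ((d:ℝ) / ((d:ℝ) + 1)) := by ring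
      rw [heq]
      nlinarith [mul_nonneg (mul_nonneg hε.le hc.le) h2]
    have h4 := mul_le_mul_of_nonneg_left (hcoer x) hε.le
    linarith
  constructor
  · refine PosSemidef.of_dotProduct_mulVec_nonneg hherm1 fun x => ?_
    have := hkey x
    have hexp : star x ⬝ᵥ (ε • B - D) *ᵥ x = ε * (x ⬝ᵥ B *ᵥ x) - x ⬝ᵥ D *ᵥ x := by
      rw [star_trivial, Matrix.sub_mulVec, dotProduct_sub, Matrix.smul_mulVec,
        dotProduct_smul, smul_eq_mul]
    rw [hexp]
    linarith [(abs_le.1 this).1, (abs_le.1 this).2]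
  · refine PosSemidef.of_dotProduct_mulVec_nonneg hherm2 fun x => ?_
    have := hkey x
    have hexp : star x ⬝ᵥ (ε • B + D) *ᵥ x = ε * (x ⬝ᵥ B *ᵥ x) + x ⬝ᵥ D *ᵥ x := by
      rw [star_trivial, Matrix.add_mulVec, dotProduct_add, Matrix.smul_mulVec,
        dotProduct_smul, smul_eq_mul]
    rw [hexp]
    linarith [(abs_le.1 this).1, (abs_le.1 this).2]

lemma eventually_entries_close (M : Matrix (Fin d) (Fin d) ℝ) {δ : ℝ} (hδ : 0 < δ) :
    ∀ᶠ C in nhds M, ∀ i j, |C i j - M i j| < δ := by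
  rw [Filter.eventually_all]
  intro i
  rw [Filter.eventually_all]
  intro j
  have hcont : Continuous fun C : Matrix (Fin d) (Fin d) ℝ => C i j :=
    continuous_id.matrix_elem i j
  exact hcont.continuousAt.eventually (eventually_abs_sub_lt _ hδ)

lemma trace_comp {B B' S : Matrix (Fin d) (Fin d) ℝ} (hS : S.PosDef) {ε : ℝ}
    (h1 : (ε • B - (B' - B)).PosSemidef) (h2 : (ε • B + (B' - B)).PosSemidef)
    (h3 : (ε • B⁻¹ - (B'⁻¹ - B⁻¹)).PosSemidef) (h4 : (ε • B⁻¹ + (B'⁻¹ - B⁻¹)).PosSemidef) :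
    (S⁻¹ * B' + B'⁻¹ * S).trace ≤ (1 + ε) * (S⁻¹ * B + B⁻¹ * S).trace ∧
      (1 - ε) * (S⁻¹ * B + B⁻¹ * S).trace ≤ (S⁻¹ * B' + B'⁻¹ * S).trace := by
  have hSinv : S⁻¹.PosSemidef := hS.inv.posSemidef
  have e1 := psd_mul_trace_nonneg hSinv h1
  have e2 := psd_mul_trace_nonneg hSinv h2
  have e3 := psd_mul_trace_nonneg h3 hS.posSemidef
  have e4 := psd_mul_trace_nonneg h4 hS.posSemidef
  rw [Matrix.mul_sub, Matrix.mul_sub, Matrix.mul_smul, Matrix.trace_sub, Matrix.trace_sub,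
    Matrix.trace_smul, smul_eq_mul] at e1
  rw [Matrix.mul_add, Matrix.mul_sub, Matrix.mul_smul, Matrix.trace_add, Matrix.trace_sub,
    Matrix.trace_smul, smul_eq_mul] at e2
  rw [Matrix.sub_mul, Matrix.sub_mul, Matrix.smul_mul, Matrix.trace_sub, Matrix.trace_sub,
    Matrix.trace_smul, smul_eq_mul] at e3
  rw [Matrix.add_mul, Matrix.sub_mul, Matrix.smul_mul, Matrix.trace_add, Matrix.trace_sub,
    Matrix.trace_smul, smul_eq_mul] at e4
  rw [Matrix.trace_add, Matrix.trace_add]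
  constructor <;> nlinarith [e1, e2, e3, e4]

variable (A : Matrix (Fin d) (Fin d) ℝ)

/-- The defining set of the misalignment. -/
def Tset (B : Matrix (Fin d) (Fin d) ℝ) : Set ℝ :=
  {m : ℝ | ∃ S : Matrix (Fin d) (Fin d) ℝ,
    S.PosDef ∧ IsAligned S A ∧ m = (1 / 2) * (S⁻¹ * B + B⁻¹ * S).trace - d}

lemma misalignment_eq (B : Matrix (Fin d) (Fin d) ℝ) :
    misalignment A B = sInf (Tset A B) := rfl

lemma Tset_nonempty (hA : A.PosDef) (B : Matrix (Fin d) (Fin d) ℝ) : (Tset A B).Nonempty :=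
  ⟨_, A, hA, fun μ => ⟨μ, le_rfl⟩, rfl⟩

lemma Tset_lb {B : Matrix (Fin d) (Fin d) ℝ} (hB : B.PosDef) :
    ∀ m ∈ Tset A B, -(d : ℝ) ≤ m := by
  rintro m ⟨S, hS, -, rfl⟩
  have h1 := psd_mul_trace_nonneg hS.inv.posSemidef hB.posSemidef
  have h2 := psd_mul_trace_nonneg hB.inv.posSemidef hS.posSemidef
  rw [Matrix.trace_add]
  linarith

lemma Tset_bddBelow {B : Matrix (Fin d) (Fin d) ℝ} (hB : B.PosDef) : BddBelow (Tset A B) :=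
  ⟨-(d : ℝ), fun m hm => Tset_lb A hB m hm⟩

lemma misalignment_ge {B : Matrix (Fin d) (Fin d) ℝ} (hB : B.PosDef) (hA : A.PosDef) :
    -(d : ℝ) ≤ misalignment A B :=
  le_csInf (Tset_nonempty A hA B) (Tset_lb A hB)

lemma key_comparison {B B' : Matrix (Fin d) (Fin d) ℝ} (hA : A.PosDef) (hB : B.PosDef)
    (hB' : B'.PosDef) {ε : ℝ} (hε0 : 0 < ε) (hε1 : ε ≤ 1)
    (h1 : (ε • B - (B' - B)).PosSemidef) (h2 : (ε • B + (B' - B)).PosSemidef)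
    (h3 : (ε • B⁻¹ - (B'⁻¹ - B⁻¹)).PosSemidef) (h4 : (ε • B⁻¹ + (B'⁻¹ - B⁻¹)).PosSemidef) :
    |misalignment A B' - misalignment A B| ≤ ε * (misalignment A B + d) := by
  set m := misalignment A B with hm
  set m' := misalignment A B' with hm'
  have hub : m' ≤ m + ε * (m + d) := by
    have step : ∀ x ∈ Tset A B, (m' - ε * d) / (1 + ε) ≤ x := by
      rintro x ⟨S, hS, hal, rfl⟩
      have ht := (trace_comp hS h1 h2 h3 h4).1
      have hmem : (1 / 2) * (S⁻¹ * B' + B'⁻¹ * S).trace - d ∈ Tset A B' := ⟨S, hS, hal, rfl⟩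
      have hm'le : m' ≤ (1 / 2) * (S⁻¹ * B' + B'⁻¹ * S).trace - d :=
        csInf_le (Tset_bddBelow A hB') hmem
      rw [div_le_iff₀ (by linarith : (0:ℝ) < 1 + ε)]
      nlinarith [ht, hm'le]
    have hle : (m' - ε * d) / (1 + ε) ≤ m := le_csInf (Tset_nonempty A hA B) step
    rw [div_le_iff₀ (by linarith : (0:ℝ) < 1 + ε)] at hle
    nlinarith [hle]
  have hlb : m - ε * (m + d) ≤ m' := by
    refine le_csInf (Tset_nonempty A hA B') ?_
    rintro x ⟨S, hS, hal, rfl⟩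
    have ht := (trace_comp hS h1 h2 h3 h4).2
    have hmle : m ≤ (1 / 2) * (S⁻¹ * B + B⁻¹ * S).trace - d :=
      csInf_le (Tset_bddBelow A hB) ⟨S, hS, hal, rfl⟩
    nlinarith [ht, hmle]
  rw [abs_le]
  constructor <;> linarith

end MisalignAux

open MisalignAux Filter in
/-- For fixed positive definite `A`, the misalignment `B ↦ M(A, B)` is
continuous on the set of symmetric positive definite matrices. -/
theorem misalignment_continuousOn {d : ℕ} (A : Matrix (Fin d) (Fin d) ℝ) (hA : A.PosDef) :
    ContinuousOn (fun B => misalignment A B)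
      {B : Matrix (Fin d) (Fin d) ℝ | B.PosDef} := by
  intro B0 hB0
  have hB0' : B0.PosDef := hB0
  refine Metric.tendsto_nhds.2 ?_
  intro ε hε
  set m := misalignment A B0 with hm
  obtain ⟨c, hc, hcoer⟩ := coercive hB0'
  obtain ⟨c₂, hc₂, hcoer₂⟩ := coercive hB0'.inv
  set ε' := min 1 (ε / (2 * (|m| + d + 1))) with hε'def
  have hε'0 : 0 < ε' := lt_min one_pos (by positivity)
  have hε'1 : ε' ≤ 1 := min_le_left _ _
  have hδ₁ : (0:ℝ) < ε' * c / (d + 1) := by positivity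
  have hδ₂ : (0:ℝ) < ε' * c₂ / (d + 1) := by positivity
  have hev1 := eventually_entries_close B0 hδ₁
  have hinvcont : ContinuousAt (Inv.inv) B0 := by
    apply continuousAt_matrix_inv
    rw [Ring.inverse_eq_inv']
    exact continuousAt_inv₀ hB0'.det_pos.ne'
  have hev2 := hinvcont.eventually (eventually_entries_close B0⁻¹ hδ₂)
  filter_upwards [self_mem_nhdsWithin, nhdsWithin_le_nhds hev1, nhdsWithin_le_nhds hev2]
    with B' hB'mem h1 h2
  have hB' : B'.PosDef := hB'mem
  obtain ⟨hp1, hp2⟩ := psd_of_entry_close hB0'.1 (hB'.1.sub hB0'.1) hc hcoer hε'0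
    (fun i j => by rw [Matrix.sub_apply]; exact (h1 i j).le)
  obtain ⟨hp3, hp4⟩ := psd_of_entry_close hB0'.inv.1 (hB'.inv.1.sub hB0'.inv.1) hc₂ hcoer₂ hε'0
    (fun i j => by rw [Matrix.sub_apply]; exact (h2 i j).le)
  have hkey := key_comparison A hA hB0' hB' hε'0 hε'1 hp1 hp2 hp3 hp4
  have hge : -(d:ℝ) ≤ m := misalignment_ge A hB0' hA
  rw [Real.dist_eq]
  have h5 : ε' * (m + d) ≤ ε / (2 * (|m| + d + 1)) * (|m| + d + 1) := by
    refine mul_le_mul (min_le_right _ _) ?_ (by linarith) (by positivity)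
    linarith [le_abs_self m]
  have h6 : ε / (2 * (|m| + d + 1)) * (|m| + d + 1) = ε / 2 := by
    field_simp
  calc |misalignment A B' - m| ≤ ε' * (m + d) := hkey
    _ < ε := by rw [h6] at h5; linarith
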